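/- Under the same hypotheses (Y compact, g continuous with |g| ≤ M, g > δ on U_p, g < −δ on U_q, φ(U_q) ⊂ U_q, φ^N(Y ∖ U_p) ⊂ U_q, gₙ(z) = Σ_{k=0}^{n−1} g(φᵏ(z))): for all sufficiently large n, every z with gₙ(z) = 0 satisfies φⁿ(z) ∈ U_q. -/

import Mathlib

open Function Set

/-- Second half of the main technical lemma: if `gₙ(z) = 0` for large `n`,
then `φⁿ(z) ∈ U_q`. -/
theorem stmt_9
    {Y : Type*} [MetricSpace Y] [CompactSpace Y]
    (φ : Y → Y) (hφ : Continuous φ)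
    (g : Y → ℝ) (hg : Continuous g)
    (M : ℝ) (hM : ∀ z, |g z| ≤ M)
    (p q : Y) (Up Uq : Set Y)
    (hUpo : IsOpen Up) (hUqo : IsOpen Uq) (hdisj : Disjoint Up Uq)
    (hp : p ∈ Up) (hq : q ∈ Uq)
    (δ : ℝ) (hδ : 0 < δ)
    (hgp : ∀ z ∈ Up, δ < g z) (hgq : ∀ z ∈ Uq, g z < -δ)
    (hinv : MapsTo φ Uq Uq)
    (N : ℕ) (hN : ∀ z, z ∉ Up → φ^[N] z ∈ Uq) :
    ∃ n₀ : ℕ, ∀ n ≥ n₀, ∀ z : Y,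
      (∑ k ∈ Finset.range n, g (φ^[k] z)) = 0 → φ^[n] z ∈ Uq := by
  classical
  have hMδ : δ < M := lt_of_lt_of_le (hgp p hp) ((le_abs_self _).trans (hM p))
  have hM0 : 0 < M := hδ.trans hMδ
  obtain ⟨n₀, hn₀⟩ : ∃ n₀ : ℕ, N * (M + δ) / δ ≤ n₀ := exists_nat_ge _
  refine ⟨n₀ + 1, fun n hn z hz => ?_⟩
  have hn1 : 1 ≤ n := le_trans (Nat.le_add_left 1 n₀) hn
  have hex : ∃ i, φ^[i] z ∉ Up := by
    by_contra h
    push_neg at h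
    have hpos : 0 < ∑ k ∈ Finset.range n, g (φ^[k] z) :=
      Finset.sum_pos (fun k _ => hδ.trans (hgp _ (h k)))
        ⟨0, Finset.mem_range.mpr hn1⟩
    linarith
  set k := Nat.find hex with hk
  have hkspec : φ^[k] z ∉ Up := Nat.find_spec hex
  have hkmin : ∀ j < k, φ^[j] z ∈ Up := fun j hj => by
    by_contra hc; exact absurd hj (not_lt.mpr (Nat.find_le hc))
  -- the first k iterates stay in Up, bound k
  have hkn : k ≤ n := by
    by_contra hc
    push_neg at hc
    have : φ^[0] z ∈ Up := hkmin 0 (lt_of_le_of_lt (Nat.zero_le _) (lt_of_lt_of_le hn1 hc.le))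
    -- need k ≤ n anyway; derive from sum bounds instead
    -- every iterate below n is in Up, so sum positive
    have hpos : 0 < ∑ i ∈ Finset.range n, g (φ^[i] z) :=
      Finset.sum_pos (fun i hi => hδ.trans (hgp _ (hkmin i (lt_of_lt_of_le (Finset.mem_range.mp hi) hc.le))))
        ⟨0, Finset.mem_range.mpr hn1⟩
    linarith
  have hsplit : (∑ i ∈ Finset.range k, g (φ^[i] z)) +
      (∑ i ∈ Finset.Ico k n, g (φ^[i] z)) = ∑ i ∈ Finset.range n, g (φ^[i] z) := by
    rw [Finset.range_eq_Ico, Finset.range_eq_Ico]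
    exact Finset.sum_Ico_consecutive (fun i => g (φ^[i] z)) (Nat.zero_le k) hkn
  have h1 : (k : ℝ) * δ ≤ ∑ i ∈ Finset.range k, g (φ^[i] z) := by
    calc (k : ℝ) * δ = ∑ _i ∈ Finset.range k, δ := by
          rw [Finset.sum_const, Finset.card_range, nsmul_eq_mul]
      _ ≤ _ := Finset.sum_le_sum fun i hi =>
          (hgp _ (hkmin i (Finset.mem_range.mp hi))).le
  have h2 : -((n : ℝ) - k) * M ≤ ∑ i ∈ Finset.Ico k n, g (φ^[i] z) := by
    have : ∑ i ∈ Finset.Ico k n, (-M) ≤ ∑ i ∈ Finset.Ico k n, g (φ^[i] z) :=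
      Finset.sum_le_sum fun i _ => neg_le_of_abs_le (hM _)
    rw [Finset.sum_const, Nat.card_Ico, nsmul_eq_mul] at this
    calc -((n : ℝ) - k) * M = ((n - k : ℕ) : ℝ) * (-M) := by
          rw [Nat.cast_sub hkn]; ring
      _ ≤ _ := this
  -- derive N ≤ n - k
  have hkey : (k : ℝ) * δ ≤ ((n : ℝ) - k) * M := by
    nlinarith [hsplit, h1, h2, hz]
  have hNnk : N ≤ n - k := by
    have hnn : (N : ℝ) * (M + δ) ≤ ((n : ℝ) - k) * (M + δ) := by
      have hna : N * (M + δ) ≤ (n : ℝ) * δ := by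
        rw [div_le_iff₀ hδ] at hn₀
        calc (N : ℝ) * (M + δ) ≤ (n₀ : ℝ) * δ := hn₀
          _ ≤ (n : ℝ) * δ := by
              have : (n₀ : ℝ) ≤ n := by
                exact_mod_cast le_trans (Nat.le_succ n₀) hn
              nlinarith
      nlinarith
    have : (N : ℝ) ≤ (n : ℝ) - k := le_of_mul_le_mul_right hnn (by linarith)
    have : (N : ℝ) ≤ ((n - k : ℕ) : ℝ) := by rw [Nat.cast_sub hkn]; exact this
    exact_mod_cast this
  -- conclude
  have hiter : MapsTo (φ^[n - k - N]) Uq Uq := hinv.iterate _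
  have hdecomp : n = (n - k - N) + (N + k) := by omega
  have : φ^[n] z = φ^[n - k - N] (φ^[N] (φ^[k] z)) := by
    conv_lhs => rw [hdecomp]
    rw [Function.iterate_add_apply, Function.iterate_add_apply]
  rw [this]
  exact hiter (hN _ hkspec)
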